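/- Let p ∈ (0,1), define f : (0,∞) → ℝ by f(x) = (x/4)·( 1/((1−p)·x + p) + 1/(p·x + 1 − p) + 1/x + 1 ), and let r be the scalar-curvature function of f. Then f″(1) = −p(1−p), and as a → 0, r(a) = (6 + 36·f″(1)) − 20·p(1−p)·(14p² − 14p + 3)·a² + O(a⁴). In particular, if (7−√7)/14 < p < (7+√7)/14 then the coefficient of a² is positive and r has a strict local minimum at the origin. -/

import Mathlib

open Filter Topology Asymptotics

/-- The scalar-curvature function `r(a)` of the monotone metric on `2×2` density
matrices induced by `f`, at the state with eigenvalues `(1±a)/2`;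
here `c = (1−a)/(1+a)`. -/
noncomputable def scurv (f : ℝ → ℝ) (a : ℝ) : ℝ :=
  14*(a - 1) * (deriv f ((1-a)/(1+a)))^2 / ((1+a)^3 * (f ((1-a)/(1+a)))^2)
    + 2*(a^2 + 7*a - 6) * deriv f ((1-a)/(1+a)) / ((1+a)^2 * a * f ((1-a)/(1+a)))
    + 8*(1 - a) * iteratedDeriv 2 f ((1-a)/(1+a)) / ((1+a)^3 * f ((1-a)/(1+a)))
    + 2*(1+a) * f ((1-a)/(1+a)) / a^2
    + (3*a^3 + 5*a^2 + 8*a - 4) / (2*(1+a)*a^2)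

/-- The explicit function `f` for our measure. -/
noncomputable def Fp (p x : ℝ) : ℝ := x/4 * (1/((1-p)*x + p) + 1/(p*x + 1 - p) + 1/x + 1)

/-- First derivative of `Fp`. -/
noncomputable def F1 (p x : ℝ) : ℝ := p/(4*((1-p)*x+p)^2) + (1-p)/(4*(p*x+1-p)^2) + 1/4

/-- Second derivative of `Fp`. -/
noncomputable def F2 (p x : ℝ) : ℝ :=
  -(p*(1-p)/2) * (1/((1-p)*x+p)^3 + 1/(p*x+1-p)^3)

noncomputable def Np (p a : ℝ) : ℝ :=
  ((-1344)*p + 13760*p^2 + (-49920)*p^3 + 87680*p^4 + (-75264)*p^5 + 25088*p^6)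
  + (4992*p + (-64768)*p^2 + 347904*p^3 + (-1023872)*p^4 + 1801216*p^5 + (-1902592)*p^6 + 1116160*p^7 + (-279040)*p^8)*a^2
  + ((-6912)*p + 109056*p^2 + (-756992)*p^3 + 3056128*p^4 + (-7949568)*p^5 + 13867776*p^6 + (-16263168)*p^7 + 12375552*p^8 + (-5539840)*p^9 + 1107968*p^10)*a^4
  + (4224*p + (-78848)*p^2 + 666368*p^3 + (-3378560)*p^4 + 11457536*p^5 + (-27371520)*p^6 + 47126528*p^7 + (-58605056)*p^8 + 51671040*p^9 + (-30789632)*p^10 + 11157504*p^11 + (-1859584)*p^12)*a^6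
  + ((-960)*p + 20800*p^2 + (-207360)*p^3 + 1262720*p^4 + (-5254400)*p^5 + 15819520*p^6 + (-35543040)*p^7 + 60480000*p^8 + (-78100480)*p^9 + 75724800*p^10 + (-53657600)*p^11 + 26337280*p^12 + (-8028160)*p^13 + 1146880*p^14)*a^8

noncomputable def Qp (p a : ℝ) : ℝ :=
  Np p a / (4*(1-a+2*a*p)^3*(1+a-2*a*p)^3*(2-a^2*(2-4*p+4*p^2))^2)

lemma hasDerivAt_Fp (p x : ℝ) (hx : x ≠ 0) (hu : (1-p)*x+p ≠ 0) (hv : p*x+1-p ≠ 0) :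
    HasDerivAt (Fp p) (F1 p x) x := by
  have hu' : HasDerivAt (fun y : ℝ => (1-p)*y+p) (1-p) x := by
    simpa using ((hasDerivAt_id x).const_mul (1-p)).add_const p
  have hv' : HasDerivAt (fun y : ℝ => p*y+1-p) p x := by
    have : HasDerivAt (fun y : ℝ => p*y+(1-p)) p x := by
      simpa using ((hasDerivAt_id x).const_mul p).add_const (1-p)
    convert this using 2; ring
  have h1 : HasDerivAt (fun y : ℝ => 1/((1-p)*y+p) + 1/(p*y+1-p) + 1/y + 1)
      (-(1-p)/((1-p)*x+p)^2 + -p/(p*x+1-p)^2 + -1/x^2) x := by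
    have a1 := hu'.inv hu
    have a2 := hv'.inv hv
    have a3 := (hasDerivAt_id x).inv hx
    have := ((a1.add a2).add a3).add_const 1
    simp only [one_div] at *
    exact this
  have h2 : HasDerivAt (fun y : ℝ => y/4) (1/4 : ℝ) x := by
    simpa using (hasDerivAt_id x).div_const 4
  have h := h2.mul h1
  have : HasDerivAt (Fp p)
      (1/4 * (1/((1-p)*x+p) + 1/(p*x+1-p) + 1/x + 1)
        + x/4 * (-(1-p)/((1-p)*x+p)^2 + -p/(p*x+1-p)^2 + -1/x^2)) x := by
    unfold Fp
    exact h
  convert this using 1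
  unfold F1
  field_simp
  ring

lemma hasDerivAt_F1 (p x : ℝ) (hu : (1-p)*x+p ≠ 0) (hv : p*x+1-p ≠ 0) :
    HasDerivAt (F1 p) (F2 p x) x := by
  have hu' : HasDerivAt (fun y : ℝ => (1-p)*y+p) (1-p) x := by
    simpa using ((hasDerivAt_id x).const_mul (1-p)).add_const p
  have hv' : HasDerivAt (fun y : ℝ => p*y+1-p) p x := by
    have : HasDerivAt (fun y : ℝ => p*y+(1-p)) p x := by
      simpa using ((hasDerivAt_id x).const_mul p).add_const (1-p)
    convert this using 2; ring
  have hu2 : HasDerivAt (fun y : ℝ => 4*((1-p)*y+p)^2) (4*(2*((1-p)*x+p)*(1-p))) x := by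
    simpa [mul_comm] using ((hu'.pow 2).const_mul 4)
  have hv2 : HasDerivAt (fun y : ℝ => 4*(p*y+1-p)^2) (4*(2*(p*x+1-p)*p)) x := by
    simpa [mul_comm] using ((hv'.pow 2).const_mul 4)
  have hu2ne : 4*((1-p)*x+p)^2 ≠ 0 := by positivity
  have hv2ne : 4*(p*x+1-p)^2 ≠ 0 := by positivity
  have a1 := (hu2.inv hu2ne).const_mul p
  have a2 := (hv2.inv hv2ne).const_mul (1-p)
  have h := (a1.add a2).add_const (1/4 : ℝ)
  have : HasDerivAt (F1 p)
      (p * (-(4*(2*((1-p)*x+p)*(1-p))) / (4*((1-p)*x+p)^2)^2)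
        + (1-p) * (-(4*(2*(p*x+1-p)*p)) / (4*(p*x+1-p)^2)^2)) x := by
    unfold F1
    simp only [div_eq_mul_inv] at *
    exact h
  convert this using 1
  unfold F2
  field_simp
  ring

/-- Values of `f`, `deriv f`, `iteratedDeriv 2 f` on positive reals. -/
lemma derivs_eq (p : ℝ) (hp0 : 0 < p) (hp1 : p < 1) (f : ℝ → ℝ)
    (hf : ∀ x > (0:ℝ), f x = x/4 * (1/((1-p)*x + p) + 1/(p*x + 1 - p) + 1/x + 1))
    (c : ℝ) (hc : 0 < c) :
    f c = Fp p c ∧ deriv f c = F1 p c ∧ iteratedDeriv 2 f c = F2 p c := by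
  have hpos : ∀ x : ℝ, 0 < x → x ≠ 0 ∧ (1-p)*x+p ≠ 0 ∧ p*x+1-p ≠ 0 := by
    intro x hx
    refine ⟨ne_of_gt hx, ne_of_gt ?_, ne_of_gt ?_⟩ <;> nlinarith
  have hev : f =ᶠ[𝓝 c] Fp p :=
    Filter.eventuallyEq_of_mem (Ioi_mem_nhds hc) (fun x hx => hf x hx)
  have hev1 : deriv f =ᶠ[𝓝 c] F1 p := by
    filter_upwards [hev.deriv, Ioi_mem_nhds hc] with x hx hx'
    obtain ⟨h1, h2, h3⟩ := hpos x hx'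
    rw [hx, (hasDerivAt_Fp p x h1 h2 h3).deriv]
  obtain ⟨h1, h2, h3⟩ := hpos c hc
  refine ⟨hf c hc, ?_, ?_⟩
  · rw [hev.deriv_eq, (hasDerivAt_Fp p c h1 h2 h3).deriv]
  · rw [show iteratedDeriv 2 f = deriv (deriv f) by
      simp [iteratedDeriv_succ, iteratedDeriv_one]]
    rw [hev1.deriv_eq, (hasDerivAt_F1 p c h2 h3).deriv]

/-- Abstract combination lemma, with `U,V,W,A` opaque. -/
lemma combine (a p U V W A C K N D : ℝ) (ha : a ≠ 0) (h1 : 1+a ≠ 0)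
    (hU : U ≠ 0) (hV : V ≠ 0) (hW : W ≠ 0)
    (hD : D = 4*a^2*(1+a)*U^3*V^3*W^2)
    (hpoly : 14*(a-1)*A^2*(a^2*U*V) + (a^2+7*a-6)*A*(4*a*U^2*V^2*W)
      + (-(8*p*(1-p)))*(1-a)*(1+a)*(U^3+V^3)*(4*a^2*(1+a)*U*V*W)
      + 4*(1+a)*U^2*V^2*W^3 + (3*a^3+5*a^2+8*a-4)*(2*U^3*V^3*W^2)
      = (C - K*a^2)*D + a^6*(1+a)*N) :
    14*(a - 1) * (A/(4*U^2*V^2))^2 / ((1+a)^3 * (W/(2*U*V*(1+a)))^2)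
      + 2*(a^2 + 7*a - 6) * (A/(4*U^2*V^2)) / ((1+a)^2 * a * (W/(2*U*V*(1+a))))
      + 8*(1 - a) * (-(p*(1-p)/2) * (1+a)^3 * (U^3+V^3) / (U^3*V^3)) / ((1+a)^3 * (W/(2*U*V*(1+a))))
      + 2*(1+a) * (W/(2*U*V*(1+a))) / a^2
      + (3*a^3 + 5*a^2 + 8*a - 4) / (2*(1+a)*a^2)
      = (C - K * a^2) + a^4 * (N/(4*U^3*V^3*W^2)) := by
  have e1 : 14*(a - 1) * (A/(4*U^2*V^2))^2 / ((1+a)^3 * (W/(2*U*V*(1+a)))^2)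
      = (14*(a-1)*A^2*(a^2*U*V))/D := by
    rw [hD]; field_simp; ring
  have e2 : 2*(a^2 + 7*a - 6) * (A/(4*U^2*V^2)) / ((1+a)^2 * a * (W/(2*U*V*(1+a))))
      = ((a^2+7*a-6)*A*(4*a*U^2*V^2*W))/D := by
    rw [hD]; field_simp; ring
  have e3 : 8*(1 - a) * (-(p*(1-p)/2) * (1+a)^3 * (U^3+V^3) / (U^3*V^3)) / ((1+a)^3 * (W/(2*U*V*(1+a))))
      = ((-(8*p*(1-p)))*(1-a)*(1+a)*(U^3+V^3)*(4*a^2*(1+a)*U*V*W))/D := by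
    rw [hD]; field_simp
  have e4 : 2*(1+a) * (W/(2*U*V*(1+a))) / a^2 = (4*(1+a)*U^2*V^2*W^3)/D := by
    rw [hD]; field_simp
  have e5 : (3*a^3 + 5*a^2 + 8*a - 4) / (2*(1+a)*a^2)
      = ((3*a^3+5*a^2+8*a-4)*(2*U^3*V^3*W^2))/D := by
    rw [hD]; field_simp; ring
  rw [e1, e2, e3, e4, e5, ← add_div, ← add_div, ← add_div,
    ← add_div, hpoly, hD]
  field_simp

set_option maxHeartbeats 4000000 in
/-- Closed forms at `c = (1-a)/(1+a)`. -/
lemma key_identity (p a : ℝ) (hp0 : 0 < p) (hp1 : p < 1) (ha0 : a ≠ 0)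
    (ha1 : -1 < a) (ha2 : a < 1) :
    14*(a - 1) * (F1 p ((1-a)/(1+a)))^2 / ((1+a)^3 * (Fp p ((1-a)/(1+a)))^2)
      + 2*(a^2 + 7*a - 6) * F1 p ((1-a)/(1+a)) / ((1+a)^2 * a * Fp p ((1-a)/(1+a)))
      + 8*(1 - a) * F2 p ((1-a)/(1+a)) / ((1+a)^3 * Fp p ((1-a)/(1+a)))
      + 2*(1+a) * Fp p ((1-a)/(1+a)) / a^2
      + (3*a^3 + 5*a^2 + 8*a - 4) / (2*(1+a)*a^2)
      = ((6 - 36*(p*(1-p))) - 20*p*(1-p)*(14*p^2 - 14*p + 3) * a^2) + a^4 * Qp p a := by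
  have hopa : (0:ℝ) < 1 + a := by linarith
  have hU : (0:ℝ) < 1 - a + 2*a*p := by nlinarith
  have hV : (0:ℝ) < 1 + a - 2*a*p := by nlinarith
  have hW : (0:ℝ) < 2 - a^2*(2-4*p+4*p^2) := by nlinarith [sq_nonneg a, sq_nonneg (1-a), sq_nonneg (1+a)]
  set c : ℝ := (1-a)/(1+a) with hcdef
  have hc : 0 < c := div_pos (by linarith) hopa
  have h1a : (1:ℝ) - a ≠ 0 := ne_of_gt (by linarith)
  have hcne : c ≠ 0 := ne_of_gt hc
  have hcu : (1-p)*c+p = (1 - a + 2*a*p)/(1+a) := by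
    rw [hcdef]; field_simp; ring
  have hcv : p*c+1-p = (1 + a - 2*a*p)/(1+a) := by
    rw [hcdef]; field_simp; ring
  have hune : (1-p)*c+p ≠ 0 := by rw [hcu]; positivity
  have hvne : p*c+1-p ≠ 0 := by rw [hcv]; positivity
  have hFc : Fp p c = (2 - a^2*(2-4*p+4*p^2)) /
      (2*(1 - a + 2*a*p)*(1 + a - 2*a*p)*(1+a)) := by
    rw [Fp, hcu, hcv, hcdef]
    field_simp [show (1 - a + a*2*p) ≠ 0 by nlinarith, show (1 + a - a*2*p) ≠ 0 by nlinarith]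
    ring
  have hF1c : F1 p c =
      (p*(1 + a - 2*a*p)^2*(1+a)^2 + (1-p)*(1 - a + 2*a*p)^2*(1+a)^2
        + (1 - a + 2*a*p)^2*(1 + a - 2*a*p)^2) /
      (4*(1 - a + 2*a*p)^2*(1 + a - 2*a*p)^2) := by
    rw [F1, hcu, hcv]
    field_simp [show (1 - a + p*a*2) ≠ 0 by nlinarith, show (1 + a - p*a*2) ≠ 0 by nlinarith]
  have hF2c : F2 p c = -(p*(1-p)/2) * (1+a)^3 * ((1 - a + 2*a*p)^3 + (1 + a - 2*a*p)^3)
      / ((1 - a + 2*a*p)^3 * (1 + a - 2*a*p)^3) := by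
    rw [F2, hcu, hcv]
    field_simp [show (1 - a + p*2*a) ≠ 0 by nlinarith, show (1 + a - p*2*a) ≠ 0 by nlinarith]
    ring
  rw [hFc, hF1c, hF2c, Qp]
  exact combine a p (1 - a + 2*a*p) (1 + a - 2*a*p) (2 - a^2*(2-4*p+4*p^2))
    (p*(1 + a - 2*a*p)^2*(1+a)^2 + (1-p)*(1 - a + 2*a*p)^2*(1+a)^2
      + (1 - a + 2*a*p)^2*(1 + a - 2*a*p)^2)
    (6 - 36*(p*(1-p))) (20*p*(1-p)*(14*p^2 - 14*p + 3)) (Np p a)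
    (4*a^2*(1+a)*(1 - a + 2*a*p)^3*(1 + a - 2*a*p)^3*(2 - a^2*(2-4*p+4*p^2))^2)
    ha0 (ne_of_gt hopa) (ne_of_gt hU) (ne_of_gt hV) (ne_of_gt hW) rfl
    (by rw [Np]; ring)

/-- for `p ∈ (0,1)` and
`f(x) = (x/4)(1/((1−p)x+p) + 1/(px+1−p) + 1/x + 1)` one has `f″(1) = −p(1−p)`,
the scalar curvature satisfies
`r(a) = (6 + 36 f″(1)) − 20p(1−p)(14p²−14p+3)·a² + O(a⁴)` as `a → 0`, and if
`(7−√7)/14 < p < (7+√7)/14` then the coefficient of `a²` is positive and `r` has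
a strict local minimum at the origin. -/
theorem stmt_18 (p : ℝ) (hp0 : 0 < p) (hp1 : p < 1)
    (f : ℝ → ℝ)
    (hf : ∀ x > (0:ℝ), f x = x/4 * (1/((1-p)*x + p) + 1/(p*x + 1 - p) + 1/x + 1)) :
    iteratedDeriv 2 f 1 = -(p*(1-p)) ∧
    ((fun a : ℝ => scurv f a - ((6 + 36 * iteratedDeriv 2 f 1)
        - 20*p*(1-p)*(14*p^2 - 14*p + 3) * a^2)) =O[𝓝[≠] (0:ℝ)] fun a => a^4) ∧
    ((7 - Real.sqrt 7)/14 < p → p < (7 + Real.sqrt 7)/14 →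
      0 < -(20*p*(1-p)*(14*p^2 - 14*p + 3)) ∧
      ∃ ε > (0:ℝ), ∀ a : ℝ, 0 < |a| → |a| < ε →
        scurv f a > 6 + 36 * iteratedDeriv 2 f 1) := by
  have hd2 : iteratedDeriv 2 f 1 = -(p*(1-p)) := by
    have := (derivs_eq p hp0 hp1 f hf 1 one_pos).2.2
    rw [this, F2]
    have h1 : (1-p)*1+p = 1 := by ring
    have h2 : p*1+1-p = 1 := by ring
    rw [h1, h2]
    norm_num
  -- the main pointwise identity for 0 < |a| < 1
  have main : ∀ a : ℝ, a ≠ 0 → -1 < a → a < 1 →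
      scurv f a = ((6 - 36*(p*(1-p))) - 20*p*(1-p)*(14*p^2 - 14*p + 3) * a^2) + a^4 * Qp p a := by
    intro a ha0 ha1 ha2
    have hopa : (0:ℝ) < 1 + a := by linarith
    have hc : (0:ℝ) < (1-a)/(1+a) := div_pos (by linarith) hopa
    obtain ⟨e0, e1, e2⟩ := derivs_eq p hp0 hp1 f hf ((1-a)/(1+a)) hc
    rw [scurv, e0, e1, e2]
    exact key_identity p a hp0 hp1 ha0 ha1 ha2
  have hconst : (6 : ℝ) + 36 * iteratedDeriv 2 f 1 = 6 - 36*(p*(1-p)) := by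
    rw [hd2]; ring
  -- continuity of Qp p at 0
  have hQcont : ContinuousAt (Qp p) 0 := by
    unfold Qp Np
    apply ContinuousAt.div
    · fun_prop
    · fun_prop
    · norm_num
  refine ⟨hd2, ?_, ?_⟩
  · -- big-O part
    have hev : (fun a : ℝ => scurv f a - ((6 + 36 * iteratedDeriv 2 f 1)
        - 20*p*(1-p)*(14*p^2 - 14*p + 3) * a^2)) =ᶠ[𝓝[≠] (0:ℝ)]
        (fun a => a^4 * Qp p a) := by
      have hmem : Set.Ioo (-1:ℝ) 1 ∈ 𝓝[≠] (0:ℝ) :=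
        mem_nhdsWithin_of_mem_nhds (Ioo_mem_nhds (by norm_num) (by norm_num))
      filter_upwards [hmem, self_mem_nhdsWithin] with a ha hane
      have hane' : a ≠ 0 := hane
      rw [main a hane' ha.1 ha.2, hconst]
      ring
    refine (IsBigO.congr' ?_ hev.symm (Filter.EventuallyEq.refl _ _))
    have hQ : (fun a : ℝ => Qp p a) =O[𝓝[≠] (0:ℝ)] (fun _ => (1:ℝ)) := by
      exact (hQcont.continuousWithinAt.tendsto).isBigO_one ℝ
    have h4 : (fun a : ℝ => a^4) =O[𝓝[≠] (0:ℝ)] (fun a : ℝ => a^4) := isBigO_refl _ _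
    simpa using h4.mul hQ
  · -- local minimum part
    intro hpl hpr
    have hs7 : Real.sqrt 7 ^ 2 = 7 := Real.sq_sqrt (by norm_num)
    have hs7pos : 0 < Real.sqrt 7 := Real.sqrt_pos.mpr (by norm_num)
    have hneg : 14*p^2 - 14*p + 3 < 0 := by nlinarith
    have hK : 0 < -(20*p*(1-p)*(14*p^2 - 14*p + 3)) := by nlinarith
    refine ⟨hK, ?_⟩
    set K' : ℝ := -(20*p*(1-p)*(14*p^2 - 14*p + 3)) with hK'def
    have htend : Filter.Tendsto (fun a : ℝ => a^2 * Qp p a) (𝓝 0) (𝓝 0) := by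
      have : ContinuousAt (fun a : ℝ => a^2 * Qp p a) 0 := by
        exact ((continuous_pow 2).continuousAt : ContinuousAt (fun x : ℝ => x^2) 0).mul hQcont
      have h0 : (fun a : ℝ => a^2 * Qp p a) 0 = 0 := by norm_num
      simpa [h0] using this.tendsto
    have hball : ∀ᶠ a in 𝓝 (0:ℝ), |a^2 * Qp p a| < K'/2 := by
      have := htend (Metric.ball_mem_nhds (0:ℝ) (by positivity : (0:ℝ) < K'/2))
      filter_upwards [this] with a ha
      simp only [Set.mem_preimage, Metric.mem_ball, Real.dist_eq, sub_zero] at ha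
      exact ha
    rw [Metric.eventually_nhds_iff] at hball
    obtain ⟨ε, hε, hb⟩ := hball
    refine ⟨min ε 1, lt_min hε one_pos, ?_⟩
    intro a ha0 haε
    have hane : a ≠ 0 := by
      intro h; rw [h] at ha0; simp at ha0
    have ha1 : |a| < 1 := lt_of_lt_of_le haε (min_le_right _ _)
    have haε' : |a| < ε := lt_of_lt_of_le haε (min_le_left _ _)
    have ha1' : -1 < a := by cases' abs_lt.mp ha1 with h _; linarith
    have ha1'' : a < 1 := (abs_lt.mp ha1).2
    have hq := hb (show dist a 0 < ε by simpa [Real.dist_eq] using haε')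
    have habs : a^2 * Qp p a > -(K'/2) := by
      cases' abs_lt.mp hq with h _; linarith
    have hmain := main a hane ha1' ha1''
    rw [hconst, hmain]
    have ha2pos : 0 < a^2 := by positivity
    have key : a^4 * Qp p a = a^2 * (a^2 * Qp p a) := by ring
    nlinarith [mul_pos ha2pos (show (0:ℝ) < K'/2 + a^2 * Qp p a by linarith)]
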